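/- Let ν be a probability measure on a product of two measurable spaces with marginals ν₁ and ν₂. If H_{P₁×P₂}(ν) < ∞ for some product probability measure P₁×P₂, then ν is absolutely continuous with respect to ν₁×ν₂, and ν₁ ≪ P₁ and ν₂ ≪ P₂. -/

import Mathlib

open MeasureTheory

/-- A finite measurable partition of the space, given as a finset of sets. -/
def IsFinPart {Ω : Type*} [MeasurableSpace Ω] (P : Finset (Set Ω)) : Prop :=
  (∀ E ∈ P, MeasurableSet E) ∧ ((P : Set (Set Ω)).PairwiseDisjoint id) ∧
    ⋃₀ (P : Set (Set Ω)) = Set.univ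

/-- The relative-entropy sum `S_Π(P|Q)` with the conventions `0·log(0/q) = 0` and
`p·log(p/0) = +∞` for `p > 0`. -/
noncomputable def partSum {Ω : Type*} [MeasurableSpace Ω] (P Q : Measure Ω)
    (Pt : Finset (Set Ω)) : EReal :=
  ∑ E ∈ Pt, if P E = 0 then (0 : EReal) else if Q E = 0 then ⊤ else
    (((P E).toReal * Real.log ((P E).toReal / (Q E).toReal) : ℝ) : EReal)

/-- The relative entropy `H_Q(P) = sup_Π S_Π(P|Q)` over finite measurable partitions. -/
noncomputable def relEnt {Ω : Type*} [MeasurableSpace Ω] (P Q : Measure Ω) : EReal :=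
  ⨆ Pt ∈ {Pt : Finset (Set Ω) | IsFinPart Pt}, partSum P Q Pt

/-- Gelfand–Yaglom–Perez: finiteness of relative entropy implies absolute continuity. -/
lemma ac_of_relEnt_lt_top {Ω : Type*} [MeasurableSpace Ω] (P Q : Measure Ω)
    [IsProbabilityMeasure P] (hfin : relEnt P Q < ⊤) : P ≪ Q := by
  classical
  refine Measure.AbsolutelyContinuous.mk fun s hs hQs => ?_
  by_contra hPs
  -- the two-set partition {s, sᶜ}
  have hne : s ≠ sᶜ := by
    intro h
    apply hPs
    have : s = ∅ := by
      have := Set.inter_compl_self s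
      rw [← h, Set.inter_self] at this
      exact this
    simp [this]
  have hPt : IsFinPart ({s, sᶜ} : Finset (Set Ω)) := by
    refine ⟨?_, ?_, ?_⟩
    · intro E hE
      simp only [Finset.mem_insert, Finset.mem_singleton] at hE
      rcases hE with rfl | rfl
      · exact hs
      · exact hs.compl
    · simp only [Finset.coe_insert, Finset.coe_singleton]
      rw [Set.pairwiseDisjoint_insert]
      refine ⟨Set.pairwiseDisjoint_singleton _ _, ?_⟩
      intro j hj _
      simp only [Set.mem_singleton_iff] at hj
      subst hj
      exact disjoint_compl_right
    · simp [Set.union_compl_self]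
  have hsum : partSum P Q ({s, sᶜ} : Finset (Set Ω)) = ⊤ := by
    rw [partSum, Finset.sum_pair hne]
    rw [if_neg hPs, if_pos hQs]
    refine EReal.top_add_of_ne_bot ?_
    split_ifs
    · exact EReal.zero_ne_bot
    · simp
    · exact EReal.coe_ne_bot _
  have hle : partSum P Q ({s, sᶜ} : Finset (Set Ω)) ≤ relEnt P Q := by
    refine le_trans (le_of_eq rfl) ?_
    exact le_iSup₂ (f := fun (Pt : Finset (Set Ω)) (_ : Pt ∈ {Pt : Finset (Set Ω) | IsFinPart Pt}) => partSum P Q Pt) _ hPt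
  rw [hsum] at hle
  exact absurd (lt_of_le_of_lt hle hfin) (lt_irrefl _)

/-- If `H_{P₁×P₂}(ν) < ∞`, then `ν ≪ ν₁×ν₂`, `ν₁ ≪ P₁` and `ν₂ ≪ P₂`. -/
theorem absolutelyContinuous_of_relEnt_prod_lt_top {Ω₁ Ω₂ : Type*}
    [MeasurableSpace Ω₁] [MeasurableSpace Ω₂]
    (P₁ : Measure Ω₁) (P₂ : Measure Ω₂) [IsProbabilityMeasure P₁] [IsProbabilityMeasure P₂]
    (ν : Measure (Ω₁ × Ω₂)) [IsProbabilityMeasure ν]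
    (hfin : relEnt ν (P₁.prod P₂) < ⊤) :
    ν ≪ ν.fst.prod ν.snd ∧ ν.fst ≪ P₁ ∧ ν.snd ≪ P₂ := by
  have hAC : ν ≪ P₁.prod P₂ := ac_of_relEnt_lt_top _ _ hfin
  have h1 : ν.fst ≪ P₁ := by
    refine Measure.AbsolutelyContinuous.mk fun t ht h0 => ?_
    rw [Measure.fst_apply ht, ← Set.prod_univ]
    exact hAC (by rw [Measure.prod_prod, h0, zero_mul])
  have h2 : ν.snd ≪ P₂ := by
    refine Measure.AbsolutelyContinuous.mk fun t ht h0 => ?_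
    rw [Measure.snd_apply ht, ← Set.univ_prod]
    exact hAC (by rw [Measure.prod_prod, h0, mul_zero])
  refine ⟨?_, h1, h2⟩
  -- density argument
  set g₁ := ν.fst.rnDeriv P₁ with hg₁def
  set g₂ := ν.snd.rnDeriv P₂ with hg₂def
  set f := ν.rnDeriv (P₁.prod P₂) with hfdef
  have mg₁ : Measurable g₁ := Measure.measurable_rnDeriv _ _
  have mg₂ : Measurable g₂ := Measure.measurable_rnDeriv _ _
  have mf : Measurable f := Measure.measurable_rnDeriv _ _
  have hg₁ : P₁.withDensity g₁ = ν.fst := Measure.withDensity_rnDeriv_eq _ _ h1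
  have hg₂ : P₂.withDensity g₂ = ν.snd := Measure.withDensity_rnDeriv_eq _ _ h2
  have hf : (P₁.prod P₂).withDensity f = ν := Measure.withDensity_rnDeriv_eq _ _ hAC
  set G : Ω₁ × Ω₂ → ENNReal := fun p => g₁ p.1 * g₂ p.2 with hGdef
  have mG : Measurable G := (mg₁.comp measurable_fst).mul (mg₂.comp measurable_snd)
  have key : ν.fst.prod ν.snd = (P₁.prod P₂).withDensity G := by
    refine Measure.prod_eq fun s t hs ht => ?_
    rw [withDensity_apply _ (hs.prod ht), ← Measure.prod_restrict,
      MeasureTheory.lintegral_prod_mul mg₁.aemeasurable mg₂.aemeasurable,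
      ← withDensity_apply _ hs, ← withDensity_apply _ ht, hg₁, hg₂]
  refine Measure.AbsolutelyContinuous.mk fun s hs h0 => ?_
  -- bad sets where densities vanish or blow up
  set B : Set (Ω₁ × Ω₂) := {p | g₁ p.1 ≠ 0 ∧ g₁ p.1 ≠ ⊤ ∧ g₂ p.2 ≠ 0 ∧ g₂ p.2 ≠ ⊤} with hBdef
  have mB : MeasurableSet B := by
    have hB : B = ((fun p : Ω₁ × Ω₂ => g₁ p.1) ⁻¹' {0})ᶜ ∩
        (((fun p : Ω₁ × Ω₂ => g₁ p.1) ⁻¹' {⊤})ᶜ ∩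
        (((fun p : Ω₁ × Ω₂ => g₂ p.2) ⁻¹' {0})ᶜ ∩ ((fun p : Ω₁ × Ω₂ => g₂ p.2) ⁻¹' {⊤})ᶜ)) := by
      ext p; simp [hBdef, and_assoc]
    rw [hB]
    exact (((mg₁.comp measurable_fst) (measurableSet_singleton 0)).compl).inter
      ((((mg₁.comp measurable_fst) (measurableSet_singleton ⊤)).compl).inter
      ((((mg₂.comp measurable_snd) (measurableSet_singleton 0)).compl).inter
      (((mg₂.comp measurable_snd) (measurableSet_singleton ⊤)).compl)))
  have mset₁ : MeasurableSet (g₁ ⁻¹' {0} ∪ g₁ ⁻¹' {⊤}) :=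
    (mg₁ (measurableSet_singleton 0)).union (mg₁ (measurableSet_singleton ⊤))
  have hbad₁ : ν (Prod.fst ⁻¹' (g₁ ⁻¹' {0} ∪ g₁ ⁻¹' {⊤})) = 0 := by
    rw [← Measure.fst_apply mset₁]
    have z1 : ν.fst (g₁ ⁻¹' {0}) = 0 := by
      rw [← hg₁, withDensity_apply _ (mg₁ (measurableSet_singleton 0))]
      rw [setLIntegral_congr_fun (mg₁ (measurableSet_singleton 0))
        (fun x hx => hx)]
      simp
    have z2 : ν.fst (g₁ ⁻¹' {⊤}) = 0 := by
      refine h1 ?_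
      have h := Measure.rnDeriv_lt_top ν.fst P₁
      rw [ae_iff] at h
      have e2 : g₁ ⁻¹' {⊤} = {x | ¬ g₁ x < ⊤} := by ext x; simp [lt_top_iff_ne_top]
      rw [e2]
      exact h
    exact measure_union_null z1 z2
  have mset₂ : MeasurableSet (g₂ ⁻¹' {0} ∪ g₂ ⁻¹' {⊤}) :=
    (mg₂ (measurableSet_singleton 0)).union (mg₂ (measurableSet_singleton ⊤))
  have hbad₂ : ν (Prod.snd ⁻¹' (g₂ ⁻¹' {0} ∪ g₂ ⁻¹' {⊤})) = 0 := by
    rw [← Measure.snd_apply mset₂]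
    have z1 : ν.snd (g₂ ⁻¹' {0}) = 0 := by
      rw [← hg₂, withDensity_apply _ (mg₂ (measurableSet_singleton 0))]
      rw [setLIntegral_congr_fun (mg₂ (measurableSet_singleton 0))
        (fun y hy => hy)]
      simp
    have z2 : ν.snd (g₂ ⁻¹' {⊤}) = 0 := by
      refine h2 ?_
      have h := Measure.rnDeriv_lt_top ν.snd P₂
      rw [ae_iff] at h
      have e2 : g₂ ⁻¹' {⊤} = {y | ¬ g₂ y < ⊤} := by ext y; simp [lt_top_iff_ne_top]
      rw [e2]
      exact h
    exact measure_union_null z1 z2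
  -- ν (s ∩ B) = 0
  have hsB : ν (s ∩ B) = 0 := by
    have h0' : ((P₁.prod P₂).withDensity G) (s ∩ B) = 0 := by
      rw [← key]; exact measure_mono_null Set.inter_subset_left h0
    rw [← hf, withDensity_apply _ (hs.inter mB)]
    calc ∫⁻ p in s ∩ B, f p ∂(P₁.prod P₂)
        = ∫⁻ p in s ∩ B, (f p / G p) * G p ∂(P₁.prod P₂) := by
          refine setLIntegral_congr_fun (hs.inter mB) ?_
          rintro p ⟨-, h1p, h2p, h3p, h4p⟩
          beta_reduce
          rw [ENNReal.div_mul_cancel]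
          · exact mul_ne_zero h1p h3p
          · exact ENNReal.mul_ne_top h2p h4p
      _ = ∫⁻ p in s ∩ B, f p / G p ∂((P₁.prod P₂).withDensity G) := by
          erw [setLIntegral_withDensity_eq_setLIntegral_mul _ mG (mf.div mG) (hs.inter mB)]
          simp [mul_comm]
      _ = 0 := setLIntegral_measure_zero _ _ h0'
  -- decompose s
  have hsub : s ⊆ (s ∩ B) ∪ (Prod.fst ⁻¹' (g₁ ⁻¹' {0} ∪ g₁ ⁻¹' {⊤})
      ∪ Prod.snd ⁻¹' (g₂ ⁻¹' {0} ∪ g₂ ⁻¹' {⊤})) := by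
    intro p hp
    by_cases hB : p ∈ B
    · exact Or.inl ⟨hp, hB⟩
    · right
      simp only [hBdef, Set.mem_setOf_eq, not_and_or, not_ne_iff] at hB
      rcases hB with h | h | h | h
      · exact Or.inl (Or.inl h)
      · exact Or.inl (Or.inr h)
      · exact Or.inr (Or.inl h)
      · exact Or.inr (Or.inr h)
  exact measure_mono_null hsub
    (measure_union_null hsB (measure_union_null hbad₁ hbad₂))
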